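/- arXiv:0804.1028 — 7 statements merged into one kernel-verified Lean document; each statement's English description precedes it below -/
import Mathlib

section
/- The Narayana polynomials satisfy the three-term recurrence (n+1)·N_n(x) = (2n-1)(1+x)·N_{n-1}(x) - (n-2)(x-1)²·N_{n-2}(x) for all n ≥ 3, with N_1(x) = x and N_2(x) = x² + x. -/
open Polynomial

/-- The n-th Narayana polynomial N_n(x) = Σ_{k=1}^n (1/n)·C(n,k-1)·C(n,k)·x^k. -/
noncomputable def narayanaPoly (n : ℕ) : Polynomial ℝ :=
  ∑ k ∈ Finset.Icc 1 n, C ((n.choose (k - 1) * n.choose k : ℝ) / n) * X ^ k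

lemma chooseR (m j : ℕ) :
    ((m.choose (j+1) : ℝ)) * (j+1) = (m.choose j : ℝ) * ((m:ℝ) - j) := by
  rcases le_or_gt j m with h | h
  · calc ((m.choose (j+1) : ℝ)) * (j+1)
        = ((m.choose (j+1) * (j+1) : ℕ) : ℝ) := by push_cast; ring
      _ = ((m.choose j * (m - j) : ℕ) : ℝ) := by rw [Nat.choose_succ_right_eq m j]
      _ = (m.choose j : ℝ) * ((m:ℝ) - j) := by push_cast [Nat.cast_sub h]; ring
  · rw [Nat.choose_eq_zero_of_lt h, Nat.choose_eq_zero_of_lt (by omega)]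
    simp

lemma chooseR2 (M : ℕ) : ((M.choose 2 : ℕ) : ℝ) = (M:ℝ) * ((M:ℝ) - 1) / 2 := by
  have h := chooseR M 1
  rw [Nat.choose_one_right] at h
  push_cast at h ⊢
  linarith

lemma coeff_narayana (M K : ℕ) :
    (narayanaPoly M).coeff K =
      if K = 0 then 0 else (M.choose (K-1) * M.choose K : ℝ) / M := by
  unfold narayanaPoly
  rw [finset_sum_coeff]
  simp only [coeff_C_mul, coeff_X_pow, mul_ite, mul_one, mul_zero]
  rw [Finset.sum_ite_eq (Finset.Icc 1 M) K]
  by_cases h0 : K = 0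
  · simp [h0]
  · by_cases h1 : K ≤ M
    · simp [Finset.mem_Icc, Nat.one_le_iff_ne_zero.mpr h0, h1, h0]
    · have : M.choose K = 0 := Nat.choose_eq_zero_of_lt (by omega)
      simp [Finset.mem_Icc, h0, h1, this]

lemma expand_rhs (b c : ℝ) (p q : ℝ[X]) :
    C b * (1 + X) * p - C c * (X - 1) ^ 2 * q =
      (C b * p - C c * q) + X * ((C b * p + 2 * (C c * q)) + X * (-(C c * q))) := by
  ring

lemma crhs0 (b c : ℝ) (p q : ℝ[X]) :
    (C b * (1 + X) * p - C c * (X - 1) ^ 2 * q).coeff 0 =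
      b * p.coeff 0 - c * q.coeff 0 := by
  rw [expand_rhs]
  simp [coeff_C_mul, mul_coeff_zero]

lemma crhs1 (b c : ℝ) (p q : ℝ[X]) :
    (C b * (1 + X) * p - C c * (X - 1) ^ 2 * q).coeff 1 =
      (b * p.coeff 1 - c * q.coeff 1) + (b * p.coeff 0 + 2 * (c * q.coeff 0)) := by
  rw [expand_rhs]
  rw [coeff_add, coeff_X_mul (n := 0)]
  simp [coeff_C_mul, mul_coeff_zero]

lemma crhs2 (b c : ℝ) (p q : ℝ[X]) :
    (C b * (1 + X) * p - C c * (X - 1) ^ 2 * q).coeff 2 =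
      (b * p.coeff 2 - c * q.coeff 2) +
        ((b * p.coeff 1 + 2 * (c * q.coeff 1)) + (-(c * q.coeff 0))) := by
  rw [expand_rhs]
  rw [show (2:ℕ) = 1+1 from rfl, coeff_add, coeff_X_mul, coeff_add,
      coeff_X_mul (n := 0)]
  simp [coeff_C_mul, mul_coeff_zero]

lemma crhs3 (b c : ℝ) (p q : ℝ[X]) (k : ℕ) :
    (C b * (1 + X) * p - C c * (X - 1) ^ 2 * q).coeff (k+3) =
      (b * p.coeff (k+3) - c * q.coeff (k+3)) +
        ((b * p.coeff (k+2) + 2 * (c * q.coeff (k+2))) + (-(c * q.coeff (k+1)))) := by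
  rw [expand_rhs]
  rw [show k+3 = (k+2)+1 from rfl]
  rw [coeff_add, coeff_X_mul, coeff_add, coeff_add, show k+2 = (k+1)+1 from rfl, coeff_X_mul]
  simp [coeff_C_mul]

lemma key (m k c0 c1 c2 c3 : ℝ) (hm3 : m+3 ≠ 0) (hm2 : m+2 ≠ 0) (hm1 : m+1 ≠ 0)
    (hk1 : k+1 ≠ 0) (hk2 : k+2 ≠ 0) (hk3 : k+3 ≠ 0)
    (h1 : c1 * (k+1) = c0 * (m+1-k))
    (h2 : c2 * (k+2) = c1 * (m-k))
    (h3 : c3 * (k+3) = c2 * (m-1-k)) :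
    (m+4) * ((c0+2*c1+c2) * (c1+2*c2+c3)) / (m+3) =
      ((2*m+5) * (((c1+c2)*(c2+c3)) + ((c0+c1)*(c1+c2))) / (m+2)
        - (m+1) * ((c2*c3 - 2*(c1*c2)) + c0*c1) / (m+1)) := by
  have e1 : c1 = c0 * (m+1-k)/(k+1) := by rw [eq_div_iff hk1]; exact h1
  have e2 : c2 = c1 * (m-k)/(k+2) := by rw [eq_div_iff hk2]; exact h2
  have e3 : c3 = c2 * (m-1-k)/(k+3) := by rw [eq_div_iff hk3]; exact h3
  rw [e3, e2, e1]
  field_simp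
  ring

/-- The three-term recurrence for Narayana polynomials, with
N_1(x) = x and N_2(x) = x² + x. -/
theorem narayana_recurrence :
    narayanaPoly 1 = X ∧ narayanaPoly 2 = X ^ 2 + X ∧
    ∀ n : ℕ, 3 ≤ n →
      C ((n : ℝ) + 1) * narayanaPoly n =
        C (2 * (n : ℝ) - 1) * (1 + X) * narayanaPoly (n - 1) -
          C ((n : ℝ) - 2) * (X - 1) ^ 2 * narayanaPoly (n - 2) := by
  refine ⟨?_, ?_, ?_⟩
  · unfold narayanaPoly
    rw [show Finset.Icc 1 1 = {1} from rfl]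
    norm_num
  · unfold narayanaPoly
    rw [show Finset.Icc 1 2 = {1, 2} from rfl]
    rw [Finset.sum_insert (by decide), Finset.sum_singleton]
    norm_num
    ring
  · intro n hn
    obtain ⟨m, rfl⟩ : ∃ m, n = m + 3 := ⟨n - 3, by omega⟩
    simp only [show m+3-1 = m+2 from rfl, show m+3-2 = m+1 from rfl]
    have hm3 : ((m:ℝ)+3) ≠ 0 := by positivity
    have hm2 : ((m:ℝ)+2) ≠ 0 := by positivity
    have hm1 : ((m:ℝ)+1) ≠ 0 := by positivity
    ext K
    rw [coeff_C_mul]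
    rcases K with _ | _ | _ | k
    · rw [crhs0]; simp only [coeff_narayana]
      norm_num
    · rw [crhs1]; simp only [coeff_narayana]
      norm_num [Nat.choose_one_right]
      field_simp
      ring
    · rw [crhs2]; simp only [coeff_narayana]
      norm_num [Nat.choose_one_right, chooseR2]
      field_simp
      ring
    · rw [show k+1+1+1 = k+3 from rfl]
      rw [crhs3]
      simp only [coeff_narayana]
      simp only [show k+3 ≠ 0 by omega, show k+2 ≠ 0 by omega, show k+1 ≠ 0 by omega,
        if_false, show k+3-1 = k+2 from rfl, show k+2-1 = k+1 from rfl,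
        show k+1-1 = k from rfl, ite_false]
      set c0 : ℝ := ((m+1).choose k : ℝ) with hc0
      set c1 : ℝ := ((m+1).choose (k+1) : ℝ) with hc1
      set c2 : ℝ := ((m+1).choose (k+2) : ℝ) with hc2
      set c3 : ℝ := ((m+1).choose (k+3) : ℝ) with hc3
      have P1 : (((m+2).choose (k+1) : ℕ) : ℝ) = c0 + c1 := by
        rw [show m+2 = (m+1)+1 from rfl, Nat.choose_succ_succ]; push_cast; ring
      have P2 : (((m+2).choose (k+2) : ℕ) : ℝ) = c1 + c2 := by
        rw [show m+2 = (m+1)+1 from rfl, show k+2 = (k+1)+1 from rfl,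
          Nat.choose_succ_succ]; push_cast; ring
      have P3 : (((m+2).choose (k+3) : ℕ) : ℝ) = c2 + c3 := by
        rw [show m+2 = (m+1)+1 from rfl, show k+3 = (k+2)+1 from rfl,
          Nat.choose_succ_succ]; push_cast; ring
      have Q2 : (((m+3).choose (k+2) : ℕ) : ℝ) = c0 + 2*c1 + c2 := by
        rw [show m+3 = (m+2)+1 from rfl, show k+2 = (k+1)+1 from rfl,
          Nat.choose_succ_succ]
        push_cast [P1, P2]; ring
      have Q3 : (((m+3).choose (k+3) : ℕ) : ℝ) = c1 + 2*c2 + c3 := by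
        rw [show m+3 = (m+2)+1 from rfl, show k+3 = (k+2)+1 from rfl,
          Nat.choose_succ_succ]
        push_cast [P2, P3]; ring
      have h1 := chooseR (m+1) k
      have h2 := chooseR (m+1) (k+1)
      have h3 := chooseR (m+1) (k+2)
      rw [← hc0, ← hc1] at h1
      rw [← hc1, ← hc2] at h2
      rw [← hc2, ← hc3] at h3
      push_cast at h1 h2 h3
      have hk1 : ((k:ℝ)+1) ≠ 0 := by positivity
      have hk2 : ((k:ℝ)+2) ≠ 0 := by positivity
      have hk3 : ((k:ℝ)+3) ≠ 0 := by positivity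
      have KEY := key (m:ℝ) (k:ℝ) c0 c1 c2 c3 hm3 hm2 hm1 hk1 hk2 hk3
        (by linarith [h1]) (by linarith [h2]) (by linarith [h3])
      push_cast [P1, P2, P3, Q2, Q3]
      linear_combination KEY
end

section
/- For every even positive integer n, N_n(-1) = 0; that is, Σ_{k=1}^{n} (-1)^k·N(n,k) = 0 when n is even. -/
open Polynomial

/-- For even positive n, N_n(-1) = 0. -/
theorem narayana_eval_neg_one_even (n : ℕ) (hn : 0 < n) (he : Even n) :
    (narayanaPoly n).eval (-1) = 0 := by
  rw [narayanaPoly, eval_finset_sum]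
  simp only [eval_mul, eval_C, eval_pow, eval_X]
  apply Finset.sum_involution (g := fun k _ => n + 1 - k)
  · intro k hk
    simp only [Finset.mem_Icc] at hk
    obtain ⟨hk1, hkn⟩ := hk
    have h1 : n + 1 - k - 1 = n - k := by omega
    have h2 : n.choose (n + 1 - k) = n.choose (k - 1) := by
      have h' : n + 1 - k ≤ n := by omega
      rw [← Nat.choose_symm h']
      congr 1; omega
    have h3 : n.choose (n - k) = n.choose k := by
      rw [← Nat.choose_symm hkn]
    have h4 : ((-1 : ℝ)) ^ (n + 1 - k) = -(-1) ^ k := by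
      have hodd : Odd (n + 1 - k + k) := by
        have : n + 1 - k + k = n + 1 := by omega
        rw [this]; exact Even.add_one he
      rcases Nat.even_or_odd k with hke | hko
      · have : Odd (n + 1 - k) := by
          rcases Nat.even_or_odd (n + 1 - k) with h | h
          · exact absurd (h.add hke) (Nat.not_even_iff_odd.mpr hodd)
          · exact h
        simp [this.neg_one_pow, hke.neg_one_pow]
      · have : Even (n + 1 - k) := by
          rcases Nat.even_or_odd (n + 1 - k) with h | h
          · exact h
          · exact absurd (h.add_odd hko) (Nat.not_even_iff_odd.mpr hodd)
        simp [this.neg_one_pow, hko.neg_one_pow]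
    rw [h1, h2, h3, h4]
    ring
  · intro k hk _
    simp only [Finset.mem_Icc] at hk
    have : ¬ (n + 1 - k = k) := by
      intro h
      obtain ⟨m, hm⟩ := he
      omega
    exact fun h => this h
  · intro k hk
    simp only [Finset.mem_Icc] at hk
    show n + 1 - k ∈ Finset.Icc 1 n
    simp only [Finset.mem_Icc]
    omega
  · intro k hk
    simp only [Finset.mem_Icc] at hk
    show n + 1 - (n + 1 - k) = k
    omega
end

section
/- For every odd positive integer n, N_n(-1) ≠ 0; that is, Σ_{k=1}^{n} (-1)^k·N(n,k) ≠ 0 when n is odd. -/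
open Polynomial

lemma coeff_one_sub_X_pow (n k : ℕ) :
    ((1 - X : Polynomial ℝ) ^ n).coeff k = (-1 : ℝ) ^ k * n.choose k := by
  have h : (1 - X : Polynomial ℝ) ^ n = ∑ i ∈ Finset.range (n + 1),
      C ((-1 : ℝ) ^ i * n.choose i) * X ^ i := by
    rw [sub_eq_add_neg, add_comm, add_pow]
    refine Finset.sum_congr rfl fun i hi => ?_
    rw [neg_pow]
    simp [C_mul, C_pow]
    ring
  rw [h, finset_sum_coeff]
  simp only [coeff_C_mul, coeff_X_pow]
  by_cases hk : k < n + 1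
  · rw [Finset.sum_eq_single k]
    · simp
    · intro b _ hb; simp [Ne.symm hb]
    · intro h; exact absurd hk (by simpa using h)
  · rw [Finset.sum_eq_zero, Nat.choose_eq_zero_of_lt (by omega), Nat.cast_zero, mul_zero]
    intro b hb
    simp only [Finset.mem_range] at hb
    simp [show k ≠ b by omega]

lemma key_sum (n : ℕ) (hn : 0 < n) (ho : Odd n) :
    ∑ k ∈ Finset.Icc 1 n, (-1 : ℝ) ^ k * (n.choose (k-1) * n.choose k) =
      (-1 : ℝ) ^ ((n+1)/2) * n.choose ((n+1)/2) := by
  obtain ⟨t, ht⟩ := ho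
  set m := (n+1)/2 with hmdef
  have hm : n + 1 = 2 * m := by omega
  -- coefficient of X^(n+1) in (1 - X^2)^n, computed two ways
  have hA : ((1 - X ^ 2 : Polynomial ℝ) ^ n).coeff (n+1) = (-1 : ℝ) ^ m * n.choose m := by
    have h : (1 - X ^ 2 : Polynomial ℝ) ^ n = ∑ i ∈ Finset.range (n + 1),
        C ((-1 : ℝ) ^ i * n.choose i) * X ^ (2*i) := by
      rw [sub_eq_add_neg, add_comm, add_pow]
      refine Finset.sum_congr rfl fun i hi => ?_
      rw [neg_pow]
      simp [C_mul, C_pow, pow_mul]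
      ring
    rw [h, finset_sum_coeff]
    simp only [coeff_C_mul, coeff_X_pow]
    rw [Finset.sum_eq_single m]
    · simp [hm]
    · intro b _ hb
      simp [show ¬ (n+1 = 2*b) by omega]
    · intro h
      exact absurd (by simp; omega : m ∈ Finset.range (n+1)) h
  have hB : (1 - X ^ 2 : Polynomial ℝ) ^ n = (1 - X) ^ n * (1 + X) ^ n := by
    rw [← mul_pow]; ring_nf
  rw [hB] at hA
  rw [coeff_mul, Finset.Nat.sum_antidiagonal_eq_sum_range_succ_mk] at hA
  simp only [coeff_one_sub_X_pow, coeff_one_add_X_pow] at hA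
  rw [← hA]
  have hsub : Finset.Icc 1 n ⊆ Finset.range (n + 1 + 1) := by
    intro x hx; simp only [Finset.mem_Icc] at hx; simp only [Finset.mem_range]; omega
  have hvan : ∀ x ∈ Finset.range (n + 1 + 1), x ∉ Finset.Icc 1 n →
      (-1 : ℝ) ^ x * (n.choose x) * (n.choose (n + 1 - x)) = 0 := by
    intro x hx hx'
    simp only [Finset.mem_range] at hx
    simp only [Finset.mem_Icc, not_and, not_le] at hx'
    rcases Nat.eq_zero_or_pos x with h0 | h1
    · subst h0
      simp [Nat.choose_eq_zero_of_lt (by omega : n < n + 1 - 0)]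
    · have : x = n + 1 := by omega
      subst this
      simp [Nat.choose_eq_zero_of_lt (by omega : n < n + 1)]
  rw [← Finset.sum_subset hsub hvan]
  refine Finset.sum_congr rfl fun k hk => ?_
  simp only [Finset.mem_Icc] at hk
  rw [show n + 1 - k = n - (k - 1) by omega, Nat.choose_symm (by omega : k - 1 ≤ n)]
  push_cast
  ring


/-- For odd positive n, N_n(-1) ≠ 0. -/
theorem narayana_eval_neg_one_odd (n : ℕ) (hn : 0 < n) (ho : Odd n) :
    (narayanaPoly n).eval (-1) ≠ 0 := by
  have heval : (narayanaPoly n).eval (-1) =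
      (1 / n) * ∑ k ∈ Finset.Icc 1 n, (-1 : ℝ) ^ k * (n.choose (k-1) * n.choose k) := by
    rw [narayanaPoly, eval_finset_sum, Finset.mul_sum]
    refine Finset.sum_congr rfl fun k hk => ?_
    simp only [eval_mul, eval_C, eval_pow, eval_X]
    ring
  rw [heval, key_sum n hn ho]
  have hm : (n+1)/2 ≤ n := by omega
  have h1 : (0 : ℝ) < n.choose ((n+1)/2) := by
    exact_mod_cast Nat.choose_pos hm
  have h2 : ((-1 : ℝ) ^ ((n+1)/2)) ≠ 0 := pow_ne_zero _ (by norm_num)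
  have h3 : (1 / (n:ℝ)) ≠ 0 := by positivity
  exact mul_ne_zero h3 (mul_ne_zero h2 (ne_of_gt h1))
end

section
/- For every n ≥ 1, the Narayana polynomial N_n(x), viewed as a polynomial over the reals, has all its roots real. Moreover all roots are non-positive. -/
open Polynomial

/-- Leibniz expansion of the `(n-1)`-st derivative of `(X-1)^n (X+1)^n`. -/
lemma narayana_G_eq (n : ℕ) (hn : 1 ≤ n) :
    derivative^[n-1] ((X - C 1 : Polynomial ℝ)^n * (X + C 1)^n)
      = ∑ k ∈ Finset.range n,
          ((n-1).choose k * n.descFactorial (n-1-k) * n.descFactorial k) •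
            ((X - C 1 : Polynomial ℝ)^(k+1) * (X + C 1)^(n-k)) := by
  rw [Polynomial.iterate_derivative_mul]
  rw [show (n-1).succ = n by omega]
  refine Finset.sum_congr rfl fun k hk => ?_
  rw [Finset.mem_range] at hk
  rw [Polynomial.iterate_derivative_X_sub_pow, Polynomial.iterate_derivative_X_add_pow,
    show n - (n-1-k) = k+1 by omega,
    smul_mul_assoc, mul_smul_comm, smul_smul, smul_smul]

/-- The combinatorial identity matching coefficients. -/
lemma narayana_coeff_id (n k : ℕ) (hk : k < n) :
    (n-1).choose k * n.descFactorial (n-1-k) * n.descFactorial k * n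
      = n.factorial * (n.choose k * n.choose (k+1)) := by
  have h1 : n.descFactorial (n-1-k) = Nat.factorial (n-1-k) * n.choose (n-1-k) :=
    Nat.descFactorial_eq_factorial_mul_choose _ _
  have hsymm : n.choose (n-1-k) = n.choose (k+1) := by
    rw [show n-1-k = n - (k+1) by omega, Nat.choose_symm (by omega)]
  have h2 : n.descFactorial k = Nat.factorial k * n.choose k :=
    Nat.descFactorial_eq_factorial_mul_choose _ _
  have h3 : (n-1).choose k * Nat.factorial k * Nat.factorial (n-1-k)
      = Nat.factorial (n-1) := by
    have h := Nat.choose_mul_factorial_mul_factorial (show k ≤ n-1 by omega)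
    exact h
  have h4 : Nat.factorial (n-1) * n = Nat.factorial n := by
    rw [mul_comm]; exact Nat.mul_factorial_pred (by omega)
  rw [h1, h2, hsymm]
  calc (n-1).choose k * (Nat.factorial (n-1-k) * n.choose (k+1)) * (Nat.factorial k * n.choose k) * n
      = (n-1).choose k * Nat.factorial k * Nat.factorial (n-1-k) * n * (n.choose k * n.choose (k+1)) := by ring
    _ = Nat.factorial n * (n.choose k * n.choose (k+1)) := by rw [h3, h4]

lemma narayana_ck_pos (n k : ℕ) (hk : k < n) :
    0 < (n-1).choose k * n.descFactorial (n-1-k) * n.descFactorial k :=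
  Nat.mul_pos (Nat.mul_pos (Nat.choose_pos (by omega))
      (Nat.pos_of_ne_zero fun h => by have := Nat.descFactorial_eq_zero_iff_lt.mp h; omega))
    (Nat.pos_of_ne_zero fun h => by have := Nat.descFactorial_eq_zero_iff_lt.mp h; omega)

/-- Real roots of the iterated derivative lie in `[-1, 1]`. -/
lemma narayana_G_root_mem (n : ℕ) (hn : 1 ≤ n) (t : ℝ)
    (ht : (derivative^[n-1] ((X - C 1 : Polynomial ℝ)^n * (X + C 1)^n)).eval t = 0) :
    -1 ≤ t ∧ t ≤ 1 := by
  rw [narayana_G_eq n hn, Polynomial.eval_finset_sum] at ht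
  simp only [Polynomial.eval_smul, Polynomial.eval_mul, Polynomial.eval_pow,
    Polynomial.eval_sub, Polynomial.eval_add, Polynomial.eval_X, Polynomial.eval_C,
    smul_eq_mul, nsmul_eq_mul, Polynomial.eval_natCast] at ht
  constructor
  · by_contra h
    push_neg at h
    have hpos : 0 < (-1 : ℝ)^(n+1) *
        ∑ k ∈ Finset.range n,
          (((n-1).choose k * n.descFactorial (n-1-k) * n.descFactorial k : ℕ) : ℝ) *
            ((t - 1)^(k+1) * (t + 1)^(n-k)) := by
      rw [Finset.mul_sum]
      apply Finset.sum_pos _ (Finset.nonempty_range_iff.mpr (by omega))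
      intro k hk
      have hk' := Finset.mem_range.mp hk
      have heq : (-1 : ℝ)^(n+1) *
          ((((n-1).choose k * n.descFactorial (n-1-k) * n.descFactorial k : ℕ) : ℝ) *
            ((t - 1)^(k+1) * (t + 1)^(n-k)))
          = (((n-1).choose k * n.descFactorial (n-1-k) * n.descFactorial k : ℕ) : ℝ) *
            ((1 - t)^(k+1) * (-1 - t)^(n-k)) := by
        rw [show (1 - t) = (-1) * (t - 1) by ring, show (-1 - t) = (-1) * (t + 1) by ring,
          mul_pow, mul_pow, show n + 1 = (k+1) + (n-k) by omega, pow_add]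
        ring
      rw [heq]
      have hc : (0:ℝ) < (((n-1).choose k * n.descFactorial (n-1-k) * n.descFactorial k : ℕ) : ℝ) :=
        Nat.cast_pos.mpr (narayana_ck_pos n k hk')
      exact mul_pos hc (mul_pos (pow_pos (by linarith) _) (pow_pos (by linarith) _))
    rw [ht, mul_zero] at hpos
    exact lt_irrefl _ hpos
  · by_contra h
    push_neg at h
    have hpos : 0 < ∑ k ∈ Finset.range n,
        (((n-1).choose k * n.descFactorial (n-1-k) * n.descFactorial k : ℕ) : ℝ) *
          ((t - 1)^(k+1) * (t + 1)^(n-k)) := by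
      apply Finset.sum_pos _ (Finset.nonempty_range_iff.mpr (by omega))
      intro k hk
      have hk' := Finset.mem_range.mp hk
      have hc : (0:ℝ) < (((n-1).choose k * n.descFactorial (n-1-k) * n.descFactorial k : ℕ) : ℝ) :=
        Nat.cast_pos.mpr (narayana_ck_pos n k hk')
      exact mul_pos hc (mul_pos (pow_pos (by linarith) _) (pow_pos (by linarith) _))
    rw [ht] at hpos
    exact lt_irrefl _ hpos

lemma narayana_card_le_iter (p : Polynomial ℝ) (k : ℕ) :
    Multiset.card p.roots ≤ Multiset.card (derivative^[k] p).roots + k := by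
  induction k with
  | zero => simp
  | succ k ih =>
    refine ih.trans ?_
    rw [Function.iterate_succ_apply']
    have := (derivative^[k] p).card_roots_le_derivative
    omega

lemma narayana_base_ne_zero (n : ℕ) :
    ((X - C 1 : Polynomial ℝ)^n * (X + C 1)^n) ≠ 0 :=
  mul_ne_zero (pow_ne_zero _ (X_sub_C_ne_zero 1))
    (pow_ne_zero _ (by rw [show (X + C (1:ℝ)) = X - C (-1) by rw [map_neg, sub_neg_eq_add]]; exact X_sub_C_ne_zero (-1)))

lemma narayana_base_roots (n : ℕ) :
    Multiset.card ((X - C 1 : Polynomial ℝ)^n * (X + C 1)^n).roots = 2*n := by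
  have h2 : (X + C (1:ℝ)) = X - C (-1) := by rw [map_neg, sub_neg_eq_add]
  rw [Polynomial.roots_mul (narayana_base_ne_zero n), Polynomial.roots_pow, Polynomial.roots_pow,
    h2, Polynomial.roots_X_sub_C, Polynomial.roots_X_sub_C]
  simp
  omega

lemma narayana_base_natDegree (n : ℕ) :
    ((X - C 1 : Polynomial ℝ)^n * (X + C 1)^n).natDegree = 2*n := by
  rw [Polynomial.natDegree_mul (pow_ne_zero _ (X_sub_C_ne_zero 1))
      (pow_ne_zero _ (by rw [show (X + C (1:ℝ)) = X - C (-1) by rw [map_neg, sub_neg_eq_add]]; exact X_sub_C_ne_zero (-1))),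
    Polynomial.natDegree_pow, Polynomial.natDegree_pow, Polynomial.natDegree_X_sub_C,
    Polynomial.natDegree_X_add_C]
  omega

lemma narayana_G_card (n : ℕ) (hn : 1 ≤ n) :
    Multiset.card (derivative^[n-1] ((X - C 1 : Polynomial ℝ)^n * (X + C 1)^n)).roots
      = (derivative^[n-1] ((X - C 1 : Polynomial ℝ)^n * (X + C 1)^n)).natDegree
    ∧ 1 ≤ Multiset.card (derivative^[n-1] ((X - C 1 : Polynomial ℝ)^n * (X + C 1)^n)).roots := by
  have h1 := narayana_card_le_iter ((X - C 1 : Polynomial ℝ)^n * (X + C 1)^n) (n-1)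
  have h2 := Polynomial.card_roots' (derivative^[n-1] ((X - C 1 : Polynomial ℝ)^n * (X + C 1)^n))
  have h3 := Polynomial.natDegree_iterate_derivative
    ((X - C 1 : Polynomial ℝ)^n * (X + C 1)^n) (n-1)
  rw [narayana_base_roots n] at h1
  rw [narayana_base_natDegree n] at h3
  omega

lemma narayana_key (n : ℕ) (hn : 1 ≤ n) (z : ℂ) (hz1 : z ≠ 1) :
    ((1:ℂ) - z)^(n+1) *
        aeval ((1+z)/(1-z)) (derivative^[n-1] ((X - C 1 : Polynomial ℝ)^n * (X + C 1)^n))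
      = 2^(n+1) * (n.factorial : ℂ) * aeval z (narayanaPoly n) := by
  have h1z : (1:ℂ) - z ≠ 0 := sub_ne_zero.mpr (fun h => hz1 h.symm)
  have hn0 : (n:ℂ) ≠ 0 := Nat.cast_ne_zero.mpr (by omega)
  have hw1 : (1+z)/(1-z) - 1 = 2*z/(1-z) := by rw [div_sub_one h1z]; congr 1; ring
  have hw2 : (1+z)/(1-z) + 1 = 2/(1-z) := by rw [div_add_one h1z]; congr 1; ring
  rw [narayana_G_eq n hn, map_sum, Finset.mul_sum]
  rw [narayanaPoly, map_sum]
  rw [show Finset.Icc 1 n = Finset.Ico 1 (n+1) by rw [Finset.Ico_add_one_right_eq_Icc]]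
  rw [Finset.sum_Ico_eq_sum_range]
  simp only [Nat.add_sub_cancel]
  rw [Finset.mul_sum]
  refine Finset.sum_congr rfl fun k hk => ?_
  have hk' := Finset.mem_range.mp hk
  rw [map_nsmul, nsmul_eq_mul]
  simp only [map_mul, map_pow, map_sub, map_add, aeval_X, aeval_C, map_one]
  rw [hw1, hw2]
  have hterm : ((1:ℂ)-z)^(n+1) * ((2*z/(1-z))^(k+1) * ((2:ℂ)/(1-z))^(n-k))
      = 2^(n+1) * z^(k+1) := by
    rw [div_pow, div_pow, div_mul_div_comm, ← pow_add, show k+1+(n-k) = n+1 by omega]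
    rw [mul_comm (((1:ℂ)-z)^(n+1)), div_mul_cancel₀ _ (pow_ne_zero _ h1z)]
    rw [mul_pow, mul_right_comm, ← pow_add, show k+1+(n-k) = n+1 by omega]
  rw [mul_left_comm, hterm]
  have hcast : (((n-1).choose k * n.descFactorial (n-1-k) * n.descFactorial k : ℕ) : ℂ) * (n:ℂ)
      = (n.factorial : ℂ) * ((n.choose k : ℂ) * (n.choose (k+1) : ℂ)) := by
    exact_mod_cast congrArg (Nat.cast : ℕ → ℂ) (narayana_coeff_id n k hk')
  push_cast at hcast
  simp only [show 1 + k - 1 = k from by omega, show 1 + k = k + 1 from by omega]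
  push_cast
  field_simp
  linear_combination z^(k+1) * hcast

/-- Every complex root of N_n(x) is real and non-positive. -/
theorem narayana_roots_real_nonpos (n : ℕ) (hn : 1 ≤ n) (z : ℂ)
    (hz : Polynomial.aeval z (narayanaPoly n) = 0) :
    z.im = 0 ∧ z.re ≤ 0 := by
  have hz1 : z ≠ 1 := by
    intro h
    subst h
    have hpos : 0 < (narayanaPoly n).eval 1 := by
      rw [narayanaPoly, Polynomial.eval_finset_sum]
      apply Finset.sum_pos'
      · intro i hi
        simp only [Polynomial.eval_mul, Polynomial.eval_pow, Polynomial.eval_C,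
          Polynomial.eval_X, one_pow, mul_one]
        positivity
      · refine ⟨1, Finset.mem_Icc.mpr ⟨le_refl 1, hn⟩, ?_⟩
        simp only [Polynomial.eval_mul, Polynomial.eval_pow, Polynomial.eval_C,
          Polynomial.eval_X, one_pow, mul_one, Nat.sub_self, Nat.choose_zero_right,
          Nat.choose_one_right, Nat.cast_one, one_mul]
        have hn' : (0:ℝ) < n := by exact_mod_cast Nat.pos_of_ne_zero (by omega)
        positivity
    have h0 : algebraMap ℝ ℂ ((narayanaPoly n).eval 1) = 0 := by
      rw [← aeval_algebraMap_apply_eq_algebraMap_eval, map_one]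
      exact hz
    rw [map_eq_zero_iff (algebraMap ℝ ℂ) (algebraMap ℝ ℂ).injective] at h0
    linarith
  have h1z : (1:ℂ) - z ≠ 0 := sub_ne_zero.mpr (fun h => hz1 h.symm)
  have hkey := narayana_key n hn z hz1
  rw [hz, mul_zero] at hkey
  have hGw : aeval ((1+z)/(1-z))
      (derivative^[n-1] ((X - C 1 : Polynomial ℝ)^n * (X + C 1)^n)) = 0 := by
    rcases mul_eq_zero.mp hkey with h | h
    · exact absurd h (pow_ne_zero _ h1z)
    · exact h
  obtain ⟨hcard, hcard1⟩ := narayana_G_card n hn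
  set G : Polynomial ℝ := derivative^[n-1] ((X - C 1 : Polynomial ℝ)^n * (X + C 1)^n) with hGdef
  have hG0 : G ≠ 0 := by
    intro h
    rw [h, Polynomial.roots_zero] at hcard1
    simp at hcard1
  have hsplits := Polynomial.splits_iff_card_roots.mpr hcard
  have hfact := Polynomial.Splits.eq_prod_roots hsplits
  rw [hfact, map_mul, aeval_C] at hGw
  have hlc : algebraMap ℝ ℂ G.leadingCoeff ≠ 0 :=
    (map_ne_zero_iff _ (algebraMap ℝ ℂ).injective).mpr (Polynomial.leadingCoeff_ne_zero.mpr hG0)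
  have hprod : aeval ((1+z)/(1-z)) ((G.roots.map fun a => X - C a).prod) = 0 := by
    rcases mul_eq_zero.mp hGw with h | h
    · exact absurd h hlc
    · exact h
  rw [map_multiset_prod, Multiset.map_map] at hprod
  simp only [Function.comp, map_sub, aeval_X, aeval_C] at hprod
  obtain ⟨r, hr, hr0⟩ := Multiset.mem_map.mp (Multiset.prod_eq_zero_iff.mp hprod)
  have hweq : (1+z)/(1-z) = algebraMap ℝ ℂ r := sub_eq_zero.mp hr0
  have hroot : G.eval r = 0 := (Polynomial.mem_roots hG0).mp hr
  obtain ⟨hb1, hb2⟩ := narayana_G_root_mem n hn r (by rw [← hGdef]; exact hroot)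
  have hw : (1:ℂ) + z = (r:ℂ) * (1 - z) := by
    rw [div_eq_iff h1z] at hweq
    exact_mod_cast hweq
  have hrne : r ≠ -1 := by
    intro h
    subst h
    have h2 : (2:ℂ) = 0 := by push_cast at hw; linear_combination hw
    norm_num at h2
  have hr1 : -1 < r := lt_of_le_of_ne hb1 (Ne.symm hrne)
  have h1r : (0:ℝ) < 1 + r := by linarith
  have h1rC : ((1+r:ℝ):ℂ) ≠ 0 := Complex.ofReal_ne_zero.mpr (ne_of_gt h1r)
  have hzeq : z * ((1+r:ℝ):ℂ) = ((r-1:ℝ):ℂ) := by push_cast; linear_combination hw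
  have hzval : z = (((r-1)/(1+r) : ℝ) : ℂ) := by
    rw [Complex.ofReal_div, eq_div_iff h1rC]
    exact hzeq
  constructor
  · rw [hzval]; exact Complex.ofReal_im _
  · rw [hzval, Complex.ofReal_re]
    exact div_nonpos_iff.mpr (Or.inr ⟨by linarith, by linarith⟩)
end

section
/- For every n ≥ 1, all roots of the Narayana polynomial N_n(x) are simple (i.e., N_n(x) is squarefree over the reals), and every root lies in the interval (-∞, 0]. -/
open Polynomial

open Finset

lemma narayana_nat_ratio (n j : ℕ) :
    (j+2)*(j+1)*(n.choose (j+1) * n.choose (j+2)) =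
      (n - (j+1)) * (n - j) * (n.choose j * n.choose (j+1)) := by
  have h1 : n.choose (j+1) * (j+1) = n.choose j * (n - j) := Nat.choose_succ_right_eq n j
  have h2' : n.choose (j+2) * (j+2) = n.choose (j+1) * (n - (j+1)) := Nat.choose_succ_right_eq n (j+1)
  calc (j+2)*(j+1)*(n.choose (j+1) * n.choose (j+2))
      = (n.choose (j+2) * (j+2)) * (n.choose (j+1) * (j+1)) := by ring
    _ = (n.choose (j+1) * (n - (j+1))) * (n.choose j * (n - j)) := by rw [h1, h2']
    _ = (n - (j+1)) * (n - j) * (n.choose j * n.choose (j+1)) := by ring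

lemma narayana_ode (n : ℕ) (hn : 1 ≤ n) :
    (X^2 - X) * derivative (derivative (narayanaPoly n))
      - ((2*n : ℕ) : ℝ[X]) * (X * derivative (narayanaPoly n))
      + ((n*(n+1) : ℕ) : ℝ[X]) * narayanaPoly n = 0 := by
  have hn0 : (n:ℝ) ≠ 0 := Nat.cast_ne_zero.mpr (by omega)
  set a : ℕ → ℝ := fun k => (n.choose (k - 1) * n.choose k : ℝ) / n with ha
  have hP : narayanaPoly n = ∑ k ∈ Icc 1 n, C (a k) * X ^ k := rfl
  have hd1 : derivative (narayanaPoly n) = ∑ k ∈ Icc 1 n, C (a k * k) * X ^ (k-1) := by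
    rw [hP, derivative_sum]
    exact sum_congr rfl fun k _ => by simp only [derivative_C_mul, derivative_X_pow, C_mul]; ring
  have hd2 : derivative (derivative (narayanaPoly n))
      = ∑ k ∈ Icc 1 n, C (a k * k * ((k-1 : ℕ):ℝ)) * X ^ (k-1-1) := by
    rw [hd1, derivative_sum]
    refine sum_congr rfl fun k _ => ?_
    simp only [mul_assoc, derivative_C_mul, derivative_X_pow, C_mul]
    try ring
  suffices h : X * ((X^2 - X) * derivative (derivative (narayanaPoly n))
      - ((2*n : ℕ) : ℝ[X]) * (X * derivative (narayanaPoly n))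
      + ((n*(n+1) : ℕ) : ℝ[X]) * narayanaPoly n) = 0 by
    rcases mul_eq_zero.mp h with h' | h'
    · exact absurd h' X_ne_zero
    · exact h'
  rw [hd2, hd1, hP]
  have expand : X * ((X^2 - X) * (∑ k ∈ Icc 1 n, C (a k * k * ((k-1:ℕ):ℝ)) * X^(k-1-1))
      - ((2*n : ℕ) : ℝ[X]) * (X * ∑ k ∈ Icc 1 n, C (a k * k) * X^(k-1))
      + ((n*(n+1) : ℕ) : ℝ[X]) * ∑ k ∈ Icc 1 n, C (a k) * X^k)
      = ∑ k ∈ Icc 1 n, (C (a k * ((n:ℝ) - k) * ((n:ℝ) + 1 - k)) * X^(k+1)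
          - C (a k * k * ((k:ℝ) - 1)) * X^k) := by
    simp only [Finset.mul_sum, ← Finset.sum_sub_distrib, ← Finset.sum_add_distrib]
    refine sum_congr rfl fun k hk => ?_
    simp only [mem_Icc] at hk
    obtain ⟨j, rfl⟩ : ∃ j, k = j + 1 := ⟨k - 1, by omega⟩
    rcases j with _ | j
    · simp only [ha]
      push_cast
      simp only [map_mul, map_add, map_sub, map_neg, map_natCast, map_zero, map_one, map_ofNat]
      ring
    · have e1 : j + 1 + 1 - 1 - 1 = j := by omega
      have e2 : j + 1 + 1 - 1 = j + 1 := by omega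
      rw [e1, e2]
      simp only [ha]
      push_cast
      simp only [map_mul, map_add, map_sub, map_neg, map_natCast, map_zero, map_one, map_ofNat]
      ring
  rw [expand, Finset.sum_sub_distrib, sub_eq_zero]
  -- reindex the left sum
  have hmap : Icc 2 (n+1) = (Icc 1 n).map (addRightEmbedding 1) := by
    rw [Finset.map_add_right_Icc]
  have step1 : (∑ k ∈ Icc 1 n, C (a k * ((n:ℝ) - k) * ((n:ℝ) + 1 - k)) * X^(k+1))
      = ∑ k ∈ Icc 2 (n+1), C (a (k-1) * ((n:ℝ) - ((k-1:ℕ):ℝ)) * ((n:ℝ) + 1 - ((k-1:ℕ):ℝ))) * X^k := by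
    rw [hmap, Finset.sum_map]
    refine sum_congr rfl fun k hk => ?_
    simp only [addRightEmbedding_apply, Nat.add_sub_cancel]
  rw [step1]
  have hsub1 : Icc 2 n ⊆ Icc 2 (n+1) := Finset.Icc_subset_Icc_right (by omega)
  have hsub2 : Icc 2 n ⊆ Icc 1 n := Finset.Icc_subset_Icc_left (by omega)
  rw [← Finset.sum_subset hsub1 (fun x hx hnx => ?_), ← Finset.sum_subset hsub2 (fun x hx hnx => ?_)]
  · refine sum_congr rfl fun k hk => ?_
    simp only [mem_Icc] at hk
    obtain ⟨j, rfl⟩ : ∃ j, k = j + 2 := ⟨k - 2, by omega⟩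
    have e2 : j + 2 - 1 = j + 1 := by omega
    rw [e2]
    congr 1
    congr 1
    have hratio := narayana_nat_ratio n j
    have hj2 : j + 2 ≤ n := hk.2
    have hreal : ((j:ℝ)+2)*((j:ℝ)+1)*((n.choose (j+1) : ℝ) * (n.choose (j+2):ℝ)) =
        ((n:ℝ) - ((j:ℝ)+1)) * ((n:ℝ) - (j:ℝ)) * ((n.choose j:ℝ) * (n.choose (j+1):ℝ)) := by
      have h := congrArg (Nat.cast (R := ℝ)) hratio
      push_cast [Nat.cast_sub (by omega : j + 1 ≤ n), Nat.cast_sub (by omega : j ≤ n)] at h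
      linarith
    simp only [ha]
    have ej : j + 1 - 1 = j := by omega
    have ej2 : j + 2 - 1 = j + 1 := by omega
    rw [ej, ej2]
    push_cast
    linear_combination -hreal / (n:ℝ)
  · -- x ∈ Icc 1 n, x ∉ Icc 2 n ⇒ x = 1, term is 0
    simp only [mem_Icc] at hx hnx
    have : x = 1 := by omega
    subst this
    push_cast
    ring_nf
    simp
  · -- x ∈ Icc 2 (n+1), x ∉ Icc 2 n ⇒ x = n+1
    simp only [mem_Icc] at hx hnx
    have : x = n + 1 := by omega
    subst this
    have : n + 1 - 1 = n := by omega
    rw [this]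
    simp

lemma narayana_coeff_one (n : ℕ) (hn : 1 ≤ n) : (narayanaPoly n).coeff 1 = 1 := by
  have hn0 : (n:ℝ) ≠ 0 := Nat.cast_ne_zero.mpr (by omega)
  unfold narayanaPoly
  rw [finset_sum_coeff, Finset.sum_eq_single 1]
  · simp [coeff_C_mul, coeff_X_pow, Nat.choose_one_right, div_self hn0]
  · intro b _ hb
    simp [coeff_C_mul, coeff_X_pow, (Ne.symm hb)]
  · intro h
    exact absurd (Finset.mem_Icc.mpr ⟨le_refl 1, hn⟩) h

lemma narayana_eval_pos (n : ℕ) (hn : 1 ≤ n) {x : ℝ} (hx : 0 < x) :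
    0 < (narayanaPoly n).eval x := by
  have hn0 : (n:ℝ) ≠ 0 := Nat.cast_ne_zero.mpr (by omega)
  unfold narayanaPoly
  rw [eval_finset_sum]
  apply Finset.sum_pos'
  · intro i _
    simp only [eval_mul, eval_C, eval_pow, eval_X]
    positivity
  · refine ⟨1, Finset.mem_Icc.mpr ⟨le_refl 1, hn⟩, ?_⟩
    have hc : ((n.choose (1 - 1) : ℝ) * (n.choose 1 : ℝ)) / (n : ℝ) = 1 := by
      rw [show (1:ℕ) - 1 = 0 from rfl, Nat.choose_zero_right, Nat.choose_one_right]
      simp [div_self hn0]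
    simp only [eval_mul, eval_C, eval_pow, eval_X, pow_one, hc, one_mul]
    exact hx

lemma narayana_ne_zero (n : ℕ) (hn : 1 ≤ n) : narayanaPoly n ≠ 0 := by
  intro h
  have := narayana_coeff_one n hn
  rw [h] at this
  simp at this

lemma narayana_rootMult_le_one (n : ℕ) (hn : 1 ≤ n) (r : ℂ) :
    rootMultiplicity r ((narayanaPoly n).map (algebraMap ℝ ℂ)) ≤ 1 := by
  set Q : ℂ[X] := (narayanaPoly n).map (algebraMap ℝ ℂ) with hQdef
  have hP0 : narayanaPoly n ≠ 0 := narayana_ne_zero n hn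
  have hQ0 : Q ≠ 0 := by
    rw [hQdef]
    exact Polynomial.map_ne_zero hP0
  have q_ode : (X^2 - X) * derivative (derivative Q)
      - ((2*n : ℕ) : ℂ[X]) * (X * derivative Q)
      + ((n*(n+1) : ℕ) : ℂ[X]) * Q = 0 := by
    have h := congrArg (Polynomial.map (algebraMap ℝ ℂ)) (narayana_ode n hn)
    simpa [Polynomial.map_mul, Polynomial.map_sub, Polynomial.map_add, Polynomial.map_pow,
      Polynomial.map_natCast, ← derivative_map] using h
  by_contra hcon
  push_neg at hcon
  set m := rootMultiplicity r Q with hm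
  obtain ⟨t, ht⟩ : ∃ t, m = t + 2 := ⟨m - 2, by omega⟩
  have hfac : (X - C r) ^ m * (Q /ₘ (X - C r) ^ m) = Q :=
    Q.pow_mul_divByMonic_rootMultiplicity_eq r
  set s : ℂ[X] := Q /ₘ (X - C r) ^ m with hs
  have hsr : s.eval r ≠ 0 := eval_divByMonic_pow_rootMultiplicity_ne_zero r hQ0
  have hQeq : Q = (X - C r) ^ (t+2) * s := by rw [← hfac, ht]
  -- r = 0 is impossible: coeff 1 of Q is 1
  have hr0 : r ≠ 0 := by
    intro h0
    subst h0
    have h1 : Q.coeff 1 = 1 := by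
      rw [hQdef, coeff_map, narayana_coeff_one n hn, map_one]
    rw [hQeq] at h1
    simp only [map_zero, sub_zero, mul_comm ((X:ℂ[X]) ^ (t+2)), coeff_mul_X_pow'] at h1
    simp at h1
  -- r = 1 is impossible: eval 1 of Q is positive
  have hr1 : r ≠ 1 := by
    intro h1
    subst h1
    have he : Q.eval 1 = algebraMap ℝ ℂ ((narayanaPoly n).eval 1) := by
      rw [hQdef, eval_one_map]
    have hpos : (narayanaPoly n).eval 1 > 0 := narayana_eval_pos n hn one_pos
    have hnz : Q.eval 1 ≠ 0 := by
      rw [he]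
      intro hc
      simp only [Complex.coe_algebraMap] at hc
      exact hpos.ne' (Complex.ofReal_eq_zero.mp hc)
    apply hnz
    rw [hQeq]
    simp
  -- general case: use the ODE
  have c1 : derivative Q = (X - C r)^(t+1) * (C ((t:ℂ)+2) * s + (X - C r) * derivative s) := by
    rw [hQeq]
    simp only [derivative_mul, derivative_pow, derivative_X_sub_C, mul_one, Nat.add_sub_cancel]
    push_cast
    ring
  have c2 : derivative (derivative Q) =
      (X - C r)^t * (C ((t:ℂ)+1) * (C ((t:ℂ)+2) * s + (X - C r) * derivative s)
        + (X - C r) * (C ((t:ℂ)+2) * derivative s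
          + (derivative s + (X - C r) * derivative (derivative s)))) := by
    rw [c1]
    simp only [derivative_mul, derivative_pow, derivative_X_sub_C, derivative_C, derivative_add,
      mul_one, one_mul, zero_mul, zero_add, add_zero, Nat.add_sub_cancel]
    push_cast
    ring
  set A : ℂ[X] := C ((t:ℂ)+1) * (C ((t:ℂ)+2) * s + (X - C r) * derivative s)
        + (X - C r) * (C ((t:ℂ)+2) * derivative s
          + (derivative s + (X - C r) * derivative (derivative s))) with hA
  set B : ℂ[X] := C ((t:ℂ)+2) * s + (X - C r) * derivative s with hB
  set R : ℂ[X] := (X^2 - X) * A - ((2*n : ℕ) : ℂ[X]) * (X * ((X - C r) * B))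
      + ((n*(n+1) : ℕ) : ℂ[X]) * ((X - C r)^2 * s) with hR
  have hfactored : (X - C r)^t * R = 0 := by
    have heq : (X - C r)^t * R = (X^2 - X) * derivative (derivative Q)
        - ((2*n : ℕ) : ℂ[X]) * (X * derivative Q)
        + ((n*(n+1) : ℕ) : ℂ[X]) * Q := by
      rw [c2, c1, hQeq, hR]
      ring
    rw [heq, q_ode]
  have hR0 : R = 0 :=
    (mul_eq_zero.mp hfactored).resolve_left (pow_ne_zero _ (X_sub_C_ne_zero r))
  have hev := congrArg (eval r) hR0
  rw [hR, hA, hB] at hev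
  simp only [eval_add, eval_sub, eval_mul, eval_pow, eval_X, eval_C, eval_natCast,
    sub_self, zero_mul, mul_zero, add_zero, zero_add, eval_zero] at hev
  have hkey : (r^2 - r) * (((t:ℂ)+1) * (((t:ℂ)+2) * s.eval r)) = 0 := by
    linear_combination hev
  have h1 : r^2 - r ≠ 0 := by
    have : r^2 - r = r * (r - 1) := by ring
    rw [this]
    exact mul_ne_zero hr0 (sub_ne_zero.mpr hr1)
  have h2 : ((t:ℂ)+1) ≠ 0 := by
    have : ((t+1 : ℕ):ℂ) ≠ 0 := Nat.cast_ne_zero.mpr (by omega)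
    push_cast at this
    exact this
  have h3 : ((t:ℂ)+2) ≠ 0 := by
    have : ((t+2 : ℕ):ℂ) ≠ 0 := Nat.cast_ne_zero.mpr (by omega)
    push_cast at this
    exact this
  rcases mul_eq_zero.mp hkey with h | h
  · exact h1 h
  rcases mul_eq_zero.mp h with h | h
  · exact h2 h
  rcases mul_eq_zero.mp h with h | h
  · exact h3 h
  · exact hsr h

/-- N_n(x) is squarefree over ℝ and all its real roots are non-positive. -/
theorem narayana_squarefree_roots_nonpos (n : ℕ) (hn : 1 ≤ n) :
    Squarefree (narayanaPoly n) ∧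
      ∀ x : ℝ, (narayanaPoly n).IsRoot x → x ≤ 0 := by
  constructor
  · have hP0 : narayanaPoly n ≠ 0 := narayana_ne_zero n hn
    have hnodup : ((narayanaPoly n).aroots ℂ).Nodup := by
      rw [Multiset.nodup_iff_count_le_one]
      intro r
      rw [Polynomial.aroots, Polynomial.count_roots]
      exact narayana_rootMult_le_one n hn r
    have hsep : (narayanaPoly n).Separable :=
      (Polynomial.nodup_aroots_iff_of_splits hP0 (IsAlgClosed.splits _)).mp hnodup
    exact hsep.squarefree
  · intro x hx
    by_contra h
    push_neg at h
    exact (narayana_eval_pos n hn h).ne' hx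
end

section
/- For every n ≥ 2, the only common root of N_n(x) and N_{n-1}(x) is 0; that is, the greatest common divisor of N_n(x) and N_{n-1}(x) over ℚ is x (up to units). -/
open Polynomial

/-- The n-th Narayana polynomial over ℚ. -/
noncomputable def narayanaPolyQ (n : ℕ) : Polynomial ℚ :=
  ∑ k ∈ Finset.Icc 1 n, C ((n.choose (k - 1) * n.choose k : ℚ) / n) * X ^ k

lemma narayana_coeff (n k : ℕ) :
    (narayanaPolyQ n).coeff k =
      if 1 ≤ k ∧ k ≤ n then ((n.choose (k - 1) * n.choose k : ℚ) / n) else 0 := by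
  rw [narayanaPolyQ, Polynomial.finset_sum_coeff]
  simp only [coeff_C_mul, coeff_X_pow, mul_ite, mul_one, mul_zero]
  rw [Finset.sum_ite_eq (Finset.Icc 1 n) k
    (fun k => ((n.choose (k - 1) * n.choose k : ℚ) / n))]
  simp [Finset.mem_Icc]

lemma cast_choose_sub_two (n : ℕ) : (((n+2).choose n : ℕ) : ℚ) = ((n:ℚ)+2)*((n:ℚ)+1)/2 := by
  have h : (n+2).choose n = (n+2).choose 2 := by
    rw [← Nat.choose_symm (show 2 ≤ n+2 by omega)]
    congr 1
  rw [h, Nat.cast_choose_two]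
  push_cast
  ring

set_option maxHeartbeats 1000000 in
lemma narInterior (j t : ℕ) :
    (↑(j + 3 + t) + 3 : ℚ) *
        (↑((j + 3 + t + 2).choose (j + 2)) * ↑((j + 3 + t + 2).choose (j + 3)) / ↑(j + 3 + t + 2)) +
      ↑(j + 3 + t) *
        (↑((j + 3 + t).choose j) * ↑((j + 3 + t).choose (j + 1)) / ↑(j + 3 + t) -
            2 * (↑((j + 3 + t).choose (j + 1)) * ↑((j + 3 + t).choose (j + 2)) / ↑(j + 3 + t)) +
          ↑((j + 3 + t).choose (j + 2)) * ↑((j + 3 + t).choose (j + 3)) / ↑(j + 3 + t)) =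
    (2 * ↑(j + 3 + t) + 3) *
      (↑((j + 3 + t + 1).choose (j + 1)) * ↑((j + 3 + t + 1).choose (j + 2)) / ↑(j + 3 + t + 1) +
        ↑((j + 3 + t + 1).choose (j + 2)) * ↑((j + 3 + t + 1).choose (j + 3)) / ↑(j + 3 + t + 1)) := by
  have f1 : (Nat.factorial j : ℚ) ≠ 0 := by exact_mod_cast j.factorial_ne_zero
  have f2 : (Nat.factorial t : ℚ) ≠ 0 := by exact_mod_cast t.factorial_ne_zero
  have f3 : (Nat.factorial (j+3+t) : ℚ) ≠ 0 := by exact_mod_cast (j+3+t).factorial_ne_zero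
  have b1 : ((j:ℚ)+1) ≠ 0 := by positivity
  have b2 : ((j:ℚ)+2) ≠ 0 := by positivity
  have b3 : ((j:ℚ)+3) ≠ 0 := by positivity
  have c1 : ((t:ℚ)+1) ≠ 0 := by positivity
  have c2 : ((t:ℚ)+2) ≠ 0 := by positivity
  have c3 : ((t:ℚ)+3) ≠ 0 := by positivity
  have a1 : ((j:ℚ)+(t:ℚ)+3) ≠ 0 := by positivity
  have a2 : ((j:ℚ)+(t:ℚ)+4) ≠ 0 := by positivity
  have a3 : ((j:ℚ)+(t:ℚ)+5) ≠ 0 := by positivity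
  set D : ℚ := (((j+3+t).factorial : ℚ))^2 / (((j.factorial : ℚ))^2 * ((t.factorial : ℚ))^2)
    with hD
  have T1 : (↑((j + 3 + t + 2).choose (j + 2)) * ↑((j + 3 + t + 2).choose (j + 3))
        / ↑(j + 3 + t + 2) : ℚ)
      = D * ((((j:ℚ)+(t:ℚ)+4)^2*((j:ℚ)+(t:ℚ)+5)*((j:ℚ)+(t:ℚ)+3)) / (((j:ℚ)+1)^2*((j:ℚ)+2)^2*((j:ℚ)+3)*((t:ℚ)+1)^2*((t:ℚ)+2)^2*((t:ℚ)+3)*((j:ℚ)+(t:ℚ)+3))) := by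
    rw [Nat.cast_choose ℚ (show j+2 ≤ j+3+t+2 by omega),
        Nat.cast_choose ℚ (show j+3 ≤ j+3+t+2 by omega),
        show j+3+t+2-(j+2) = t+3 by omega, show j+3+t+2-(j+3) = t+2 by omega]
    simp only [Nat.factorial_succ, hD]
    push_cast
    field_simp
    ring
  have T2 : (↑((j + 3 + t).choose j) * ↑((j + 3 + t).choose (j + 1)) / ↑(j + 3 + t) : ℚ)
      = D * ((((j:ℚ)+1)*((j:ℚ)+2)^2*((j:ℚ)+3)) / (((j:ℚ)+1)^2*((j:ℚ)+2)^2*((j:ℚ)+3)*((t:ℚ)+1)^2*((t:ℚ)+2)^2*((t:ℚ)+3)*((j:ℚ)+(t:ℚ)+3))) := by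
    rw [Nat.cast_choose ℚ (show j ≤ j+3+t by omega),
        Nat.cast_choose ℚ (show j+1 ≤ j+3+t by omega),
        show j+3+t-j = t+3 by omega, show j+3+t-(j+1) = t+2 by omega]
    simp only [Nat.factorial_succ, hD]
    push_cast
    field_simp
    ring
  have T3 : (↑((j + 3 + t).choose (j + 1)) * ↑((j + 3 + t).choose (j + 2)) / ↑(j + 3 + t) : ℚ)
      = D * ((((j:ℚ)+2)*((j:ℚ)+3)*((t:ℚ)+2)*((t:ℚ)+3)) / (((j:ℚ)+1)^2*((j:ℚ)+2)^2*((j:ℚ)+3)*((t:ℚ)+1)^2*((t:ℚ)+2)^2*((t:ℚ)+3)*((j:ℚ)+(t:ℚ)+3))) := by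
    rw [Nat.cast_choose ℚ (show j+1 ≤ j+3+t by omega),
        Nat.cast_choose ℚ (show j+2 ≤ j+3+t by omega),
        show j+3+t-(j+1) = t+2 by omega, show j+3+t-(j+2) = t+1 by omega]
    simp only [Nat.factorial_succ, hD]
    push_cast
    field_simp
    ring
  have T4 : (↑((j + 3 + t).choose (j + 2)) * ↑((j + 3 + t).choose (j + 3)) / ↑(j + 3 + t) : ℚ)
      = D * ((((t:ℚ)+1)*((t:ℚ)+2)^2*((t:ℚ)+3)) / (((j:ℚ)+1)^2*((j:ℚ)+2)^2*((j:ℚ)+3)*((t:ℚ)+1)^2*((t:ℚ)+2)^2*((t:ℚ)+3)*((j:ℚ)+(t:ℚ)+3))) := by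
    rw [Nat.cast_choose ℚ (show j+2 ≤ j+3+t by omega),
        Nat.cast_choose ℚ (show j+3 ≤ j+3+t by omega),
        show j+3+t-(j+2) = t+1 by omega, show j+3+t-(j+3) = t by omega]
    simp only [Nat.factorial_succ, hD]
    push_cast
    field_simp
    ring
  have T5 : (↑((j + 3 + t + 1).choose (j + 1)) * ↑((j + 3 + t + 1).choose (j + 2))
        / ↑(j + 3 + t + 1) : ℚ)
      = D * ((((j:ℚ)+(t:ℚ)+4)*((j:ℚ)+2)*((j:ℚ)+3)*((j:ℚ)+(t:ℚ)+3)) / (((j:ℚ)+1)^2*((j:ℚ)+2)^2*((j:ℚ)+3)*((t:ℚ)+1)^2*((t:ℚ)+2)^2*((t:ℚ)+3)*((j:ℚ)+(t:ℚ)+3))) := by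
    rw [Nat.cast_choose ℚ (show j+1 ≤ j+3+t+1 by omega),
        Nat.cast_choose ℚ (show j+2 ≤ j+3+t+1 by omega),
        show j+3+t+1-(j+1) = t+3 by omega, show j+3+t+1-(j+2) = t+2 by omega]
    simp only [Nat.factorial_succ, hD]
    push_cast
    field_simp
    ring
  have T6 : (↑((j + 3 + t + 1).choose (j + 2)) * ↑((j + 3 + t + 1).choose (j + 3))
        / ↑(j + 3 + t + 1) : ℚ)
      = D * ((((j:ℚ)+(t:ℚ)+4)*((t:ℚ)+2)*((t:ℚ)+3)*((j:ℚ)+(t:ℚ)+3)) / (((j:ℚ)+1)^2*((j:ℚ)+2)^2*((j:ℚ)+3)*((t:ℚ)+1)^2*((t:ℚ)+2)^2*((t:ℚ)+3)*((j:ℚ)+(t:ℚ)+3))) := by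
    rw [Nat.cast_choose ℚ (show j+2 ≤ j+3+t+1 by omega),
        Nat.cast_choose ℚ (show j+3 ≤ j+3+t+1 by omega),
        show j+3+t+1-(j+2) = t+2 by omega, show j+3+t+1-(j+3) = t+1 by omega]
    simp only [Nat.factorial_succ, hD]
    push_cast
    field_simp
    ring
  rw [T1, T2, T3, T4, T5, T6]
  push_cast
  have keyp : ∀ x y : ℚ,
      (x+y+6)*((x+y+4)^2*(x+y+5)*(x+y+3)) + (x+y+3)*(((x+1)*(x+2)^2*(x+3))
        - 2*((x+2)*(x+3)*(y+2)*(y+3)) + ((y+1)*(y+2)^2*(y+3)))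
      = (2*(x+y+3)+3)*(((x+y+4)*(x+2)*(x+3)*(x+y+3)) + ((x+y+4)*(y+2)*(y+3)*(x+y+3))) := by
    intro x y
    ring
  linear_combination (D / (((j:ℚ)+1)^2*((j:ℚ)+2)^2*((j:ℚ)+3)*((t:ℚ)+1)^2*((t:ℚ)+2)^2*((t:ℚ)+3)*((j:ℚ)+(t:ℚ)+3))) * keyp (j:ℚ) (t:ℚ)

set_option maxHeartbeats 2000000 in
lemma narayana_rec (m : ℕ) :
    C ((m:ℚ)+3) * narayanaPolyQ (m+2) + C (m:ℚ) * (narayanaPolyQ m * (X - 1)^2)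
      = C (2*(m:ℚ)+3) * (narayanaPolyQ (m+1) * (X + 1)) := by
  have h2 : narayanaPolyQ m * (X - 1)^2
      = narayanaPolyQ m * X^2 - C 2 * (narayanaPolyQ m * X^1) + narayanaPolyQ m := by
    have hC : (C 2 : ℚ[X]) = 2 := map_ofNat C 2
    rw [hC]; ring
  have h1 : narayanaPolyQ (m+1) * (X + 1)
      = narayanaPolyQ (m+1) * X^1 + narayanaPolyQ (m+1) := by ring
  rw [h1, h2]
  ext k
  simp only [coeff_add, coeff_sub, coeff_C_mul, coeff_mul_X_pow', narayana_coeff]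
  rcases k with _|_|_|j
  · norm_num
  · rcases m with _|m
    · norm_num [Nat.choose]
    · split_ifs <;> try (exfalso; omega)
      norm_num [Nat.choose_zero_right, Nat.choose_one_right]
      have a1 : ((m:ℚ)+1) ≠ 0 := by positivity
      have a2 : ((m:ℚ)+2) ≠ 0 := by positivity
      have a3 : ((m:ℚ)+3) ≠ 0 := by positivity
      field_simp
      ring
  · rcases m with _|_|m
    · norm_num [Nat.choose]
    · norm_num [Nat.choose]
    · split_ifs <;> try (exfalso; omega)
      norm_num [Nat.choose_one_right, Nat.cast_choose_two]
      have a1 : ((m:ℚ)+2) ≠ 0 := by positivity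
      have a2 : ((m:ℚ)+3) ≠ 0 := by positivity
      have a3 : ((m:ℚ)+4) ≠ 0 := by positivity
      field_simp
      ring
  · rcases Nat.lt_or_ge m (j+1) with h|h
    · split_ifs <;> try (exfalso; omega)
      ring
    · rcases Nat.lt_or_ge m (j+3) with h2|h2
      · rcases (show m = j+1 ∨ m = j+2 by omega) with rfl|rfl
        · split_ifs <;> try (exfalso; omega)
          have e1 : j+1+1+1-1 = j+2 := by omega
          have e2 : j+1+1+1-2 = j+1 := by omega
          have e3 : j+1-1 = j := by omega
          have e4 : j+2-1 = j+1 := by omega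
          rw [e1, e2, e3, e4]
          norm_num [Nat.choose_self, Nat.choose_succ_self_right]
          have a1 : ((j:ℚ)+1) ≠ 0 := by positivity
          have a2 : ((j:ℚ)+1+1) ≠ 0 := by positivity
          have a3 : ((j:ℚ)+1+2) ≠ 0 := by positivity
          field_simp
          ring
        · split_ifs <;> try (exfalso; omega)
          have e1 : j+1+1+1-1 = j+2 := by omega
          have e2 : j+1+1+1-2 = j+1 := by omega
          rw [e1, e2]
          have e3 : j+1-1 = j := by omega
          have e4 : j+2-1 = j+1 := by omega
          rw [e3, e4]
          norm_num [Nat.choose_self, Nat.choose_succ_self_right, cast_choose_sub_two]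
          have a1 : ((j:ℚ)+2) ≠ 0 := by positivity
          have a2 : ((j:ℚ)+3) ≠ 0 := by positivity
          have a3 : ((j:ℚ)+4) ≠ 0 := by positivity
          field_simp
          ring
      · obtain ⟨t, rfl⟩ : ∃ t, m = j+3+t := ⟨m-(j+3), by omega⟩
        split_ifs <;> try (exfalso; omega)
        have e1 : j+1+1+1-1 = j+2 := by omega
        have e2 : j+1+1+1-2 = j+1 := by omega
        rw [e1, e2]
        have e3 : j+1-1 = j := by omega
        have e4 : j+2-1 = j+1 := by omega
        rw [e3, e4]
        have e0 : j+1+1+1 = j+3 := by omega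
        rw [e0]
        exact narInterior j t

noncomputable def narMQ (n : ℕ) : Polynomial ℚ :=
  ∑ k ∈ Finset.Icc 1 n, C ((n.choose (k - 1) * n.choose k : ℚ) / n) * X ^ (k - 1)

lemma narayana_eq_X_mul (n : ℕ) : narayanaPolyQ n = X * narMQ n := by
  rw [narayanaPolyQ, narMQ, Finset.mul_sum]
  refine Finset.sum_congr rfl fun k hk => ?_
  rw [Finset.mem_Icc] at hk
  obtain ⟨i, rfl⟩ : ∃ i, k = i + 1 := ⟨k - 1, by omega⟩
  simp only [Nat.add_sub_cancel]
  ring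

lemma narMQ_one : narMQ 1 = 1 := by
  rw [narMQ]
  simp [Finset.Icc_self, Nat.choose]

lemma narMQ_eval_one_ne (n : ℕ) (hn : 1 ≤ n) : (narMQ n).eval 1 ≠ 0 := by
  have hpos : 0 < (narMQ n).eval 1 := by
    rw [narMQ]
    simp only [eval_finset_sum, eval_mul, eval_C, eval_pow, eval_X, one_pow, mul_one]
    apply Finset.sum_pos
    · intro k hk
      rw [Finset.mem_Icc] at hk
      have h1 : 0 < n.choose (k - 1) := Nat.choose_pos (by omega)
      have h2 : 0 < n.choose k := Nat.choose_pos (by omega)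
      have h1' : (0:ℚ) < n.choose (k - 1) := by exact_mod_cast h1
      have h2' : (0:ℚ) < n.choose k := by exact_mod_cast h2
      have hn' : (0:ℚ) < n := by exact_mod_cast Nat.pos_of_ne_zero (by omega)
      positivity
    · exact ⟨1, Finset.mem_Icc.mpr ⟨le_refl 1, hn⟩⟩
  exact ne_of_gt hpos

lemma isCoprime_C_right (p : Polynomial ℚ) (c : ℚ) (hc : c ≠ 0) : IsCoprime p (C c) :=
  ⟨0, C c⁻¹, by rw [zero_mul, zero_add, ← C_mul, inv_mul_cancel₀ hc, C_1]⟩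

lemma narMQ_coprime : ∀ m : ℕ, IsCoprime (narMQ (m + 2)) (narMQ (m + 1)) := by
  intro m
  induction m with
  | zero => rw [narMQ_one]; exact isCoprime_one_right
  | succ m ih =>
    -- derive the divided recurrence
    have R := narayana_rec (m + 1)
    rw [narayana_eq_X_mul (m+1+2), narayana_eq_X_mul (m+1), narayana_eq_X_mul (m+1+1)] at R
    have E : C ((↑(m+1):ℚ) + 3) * narMQ (m+1+2) + C (↑(m+1):ℚ) * (narMQ (m+1) * (X - 1)^2)
        = C (2 * (↑(m+1):ℚ) + 3) * (narMQ (m+1+1) * (X + 1)) := by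
      apply mul_left_cancel₀ (Polynomial.X_ne_zero (R := ℚ))
      linear_combination R
    -- coprimality of narMQ (m+2) with (X-1)
    have hdvd : ¬ (X - C 1) ∣ narMQ (m + 2) := by
      rw [Polynomial.dvd_iff_isRoot]
      intro hroot
      exact narMQ_eval_one_ne (m + 2) (by omega) hroot
    have hX1 : IsCoprime (narMQ (m + 2)) (X - C 1) :=
      ((Polynomial.irreducible_X_sub_C (1:ℚ)).coprime_iff_not_dvd.mpr hdvd).symm
    have hX1' : IsCoprime (narMQ (m + 2)) ((X - 1 : Polynomial ℚ)^2) := by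
      have := hX1.pow_right (n := 2)
      rwa [C_1] at this
    have hfull : IsCoprime (narMQ (m + 2))
        (C ((↑(m+1):ℚ)) * ((X - 1 : Polynomial ℚ)^2 * narMQ (m + 1))) :=
      (isCoprime_C_right _ _ (by positivity)).mul_right (hX1'.mul_right ih)
    obtain ⟨u, v, huv⟩ := hfull
    -- build coprimality with C (m+2) * narMQ (m+3)
    have hc : ((m:ℚ) + 1 + 3) ≠ 0 := by positivity
    have final : IsCoprime (narMQ (m + 2)) (C ((↑(m+1):ℚ) + 3) * narMQ (m+1+2)) := by
      refine ⟨u + v * (C (2 * (↑(m+1):ℚ) + 3) * (X + 1)), -v, ?_⟩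
      linear_combination huv - v * E
    have := (final.of_mul_right_right).symm
    exact this

/-- The gcd of N_n and N_{n-1} over ℚ is x (up to units). -/
theorem narayana_gcd (n : ℕ) (hn : 2 ≤ n) :
    Associated (EuclideanDomain.gcd (narayanaPolyQ n) (narayanaPolyQ (n - 1))) X := by
  obtain ⟨m, rfl⟩ : ∃ m, n = m + 2 := ⟨n - 2, by omega⟩
  have hsub : m + 2 - 1 = m + 1 := by omega
  rw [hsub]
  obtain ⟨u, v, huv⟩ := narMQ_coprime m
  apply associated_of_dvd_dvd
  · -- gcd ∣ X
    have d1 : EuclideanDomain.gcd (narayanaPolyQ (m+2)) (narayanaPolyQ (m+1)) ∣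
        narayanaPolyQ (m+2) := EuclideanDomain.gcd_dvd_left _ _
    have d2 : EuclideanDomain.gcd (narayanaPolyQ (m+2)) (narayanaPolyQ (m+1)) ∣
        narayanaPolyQ (m+1) := EuclideanDomain.gcd_dvd_right _ _
    have hX : (X : Polynomial ℚ)
        = u * narayanaPolyQ (m+2) + v * narayanaPolyQ (m+1) := by
      rw [narayana_eq_X_mul (m+2), narayana_eq_X_mul (m+1)]
      linear_combination (-X) * huv
    rw [hX]
    exact dvd_add (d1.mul_left u) (d2.mul_left v)
  · -- X ∣ gcd
    exact EuclideanDomain.dvd_gcd ⟨narMQ (m+2), narayana_eq_X_mul (m+2)⟩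
      ⟨narMQ (m+1), narayana_eq_X_mul (m+1)⟩
end

section
/- For every x ∈ ℂ with |Ψ₁(x)| = |Ψ₂(x)|, where Ψ₁(x) = x + 1 + 2√x and Ψ₂(x) = x + 1 - 2√x for some branch √x = A + iB of the square root, one has A = 0; consequently the equimodular set {x : |x+1+2√x| = |x+1-2√x|} is contained in the non-positive real axis. -/
lemma key_s17 (s : ℂ) (h : ‖s ^ 2 + 1 + 2 * s‖ = ‖s ^ 2 + 1 - 2 * s‖) :
    s.re = 0 := by
  have h1 : s ^ 2 + 1 + 2 * s = (s + 1) ^ 2 := by ring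
  have h2 : s ^ 2 + 1 - 2 * s = (s - 1) ^ 2 := by ring
  rw [h1, h2, norm_pow, norm_pow] at h
  have h3 : ‖s + 1‖ = ‖s - 1‖ := by
    nlinarith [norm_nonneg (s + 1), norm_nonneg (s - 1)]
  have h4 : Complex.normSq (s + 1) = Complex.normSq (s - 1) := by
    rw [← Complex.sq_norm, ← Complex.sq_norm, h3]
  simp [Complex.normSq_apply, Complex.add_re, Complex.sub_re] at h4
  nlinarith [h4]

/-- If |x+1+2√x| = |x+1-2√x| for a branch √x = s, then Re(s) = 0; consequently the
equimodular set is contained in the non-positive real axis. -/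
theorem equimodular_set_nonpositive_axis :
    (∀ s : ℂ, ‖s ^ 2 + 1 + 2 * s‖ = ‖s ^ 2 + 1 - 2 * s‖ →
      s.re = 0) ∧
    ∀ x : ℂ, (∃ s : ℂ, s ^ 2 = x ∧
        ‖x + 1 + 2 * s‖ = ‖x + 1 - 2 * s‖) →
      x.im = 0 ∧ x.re ≤ 0 := by
  refine ⟨key_s17, ?_⟩
  rintro x ⟨s, rfl, h⟩
  have hre := key_s17 s h
  constructor
  · simp [pow_two, Complex.mul_im, hre]
  · simp [pow_two, Complex.mul_re, hre]
    nlinarith [sq_nonneg s.im]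
end
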